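/- Let (m₁,m₂,m₃,ξ,p) be a collision solution of the reduced two-body system on [t₀, t*) with t* < ∞ and ξ(t) → +∞ as t → t*⁻. Then p ∼ −√ξ in the strong sense that the ratio p/√ξ is eventually bounded and bounded away from zero: there exist t₁ ∈ [t₀, t*) and constants 0 < δ ≤ M such that −M ≤ p(t)/√(ξ(t)) ≤ −δ for all t ∈ [t₁, t*). -/

import Mathlib

open Filter Set Topology

set_option maxHeartbeats 4000000

/-- The derivative of `t ↦ p t / √(ξ t)` along the reduced two-body flow. -/
noncomputable def Dex (m1 m2 m3 xi p : ℝ → ℝ) (t : ℝ) : ℝ :=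
  (-((xi t)^2 + 1) * (1 + m2 t * m3 t - 2 * (m3 t)^2 * xi t) * Real.sqrt (xi t) -
      p t * (-((xi t)^2 + 1) * (2 * p t - m1 t) / (2 * Real.sqrt (xi t)))) /
    Real.sqrt (xi t) ^ 2

/-- If `f` starts at or above a level `c` and has strictly positive derivative at every
point of `[s,t]` where it touches `c`, then `f` cannot end below `c`. -/
lemma barrier_lemma {f D : ℝ → ℝ} {c s t : ℝ} (hst : s ≤ t)
    (hderiv : ∀ v ∈ Set.Icc s t, HasDerivAt f (D v) v)
    (hbar : ∀ v ∈ Set.Icc s t, f v = c → 0 < D v)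
    (hfs : c ≤ f s) : c ≤ f t := by
  by_contra hlt
  push_neg at hlt
  have hcont : ∀ v ∈ Set.Icc s t, ContinuousAt f v := fun v hv => (hderiv v hv).continuousAt
  set S : Set ℝ := {τ | τ ∈ Set.Icc s t ∧ c ≤ f τ} with hS
  have hsS : s ∈ S := ⟨⟨le_refl s, hst⟩, hfs⟩
  have hbdd : BddAbove S := ⟨t, fun x hx => hx.1.2⟩
  have hSclosed : IsClosed S := by
    rw [← isOpen_compl_iff, isOpen_iff_mem_nhds]
    intro x hx
    by_cases hxI : x ∈ Set.Icc s t
    · have hfx : f x < c := by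
        by_contra h
        push_neg at h
        exact hx ⟨hxI, h⟩
      have h1 : {y | f y < c} ∈ 𝓝 x := (hcont x hxI).preimage_mem_nhds (Iio_mem_nhds hfx)
      filter_upwards [h1] with y hy hyS
      exact absurd hyS.2 (not_le.2 hy)
    · have h2 : (Set.Icc s t)ᶜ ∈ 𝓝 x := isClosed_Icc.isOpen_compl.mem_nhds hxI
      filter_upwards [h2] with y hy hyS
      exact hy hyS.1
  set v := sSup S with hv
  have hvmem : v ∈ S := hSclosed.csSup_mem ⟨s, hsS⟩ hbdd
  have hvI : v ∈ Set.Icc s t := hvmem.1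
  have hvc : c ≤ f v := hvmem.2
  have hvt : v < t := by
    rcases lt_or_eq_of_le hvI.2 with h | h
    · exact h
    · exfalso
      rw [h] at hvc
      exact absurd hvc (not_le.2 hlt)
  have hafter : ∀ x, v < x → x ≤ t → f x < c := by
    intro x hvx hxt
    by_contra h
    push_neg at h
    have hxS : x ∈ S := ⟨⟨hvI.1.trans hvx.le, hxt⟩, h⟩
    exact absurd (le_csSup hbdd hxS) (not_le.2 hvx)
  have hvc' : f v ≤ c := by
    by_contra h
    push_neg at h
    have htend : Tendsto f (𝓝[>] v) (𝓝 (f v)) :=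
      ((hcont v hvI).tendsto).mono_left nhdsWithin_le_nhds
    have h1 : ∀ᶠ x in 𝓝[>] v, c < f x := htend.eventually (eventually_gt_nhds h)
    have h2 : Set.Ioo v t ∈ 𝓝[>] v := Ioo_mem_nhdsGT hvt
    obtain ⟨x, hx1, hx2⟩ := (h1.and (eventually_of_mem h2 (fun x hx => hx))).exists
    exact absurd (hafter x hx2.1 hx2.2.le) (not_lt.2 hx1.le)
  have hfvc : f v = c := le_antisymm hvc' hvc
  have hDpos := hbar v hvI hfvc
  have hslope : Tendsto (slope f v) (𝓝[≠] v) (𝓝 (D v)) :=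
    hasDerivAt_iff_tendsto_slope.1 (hderiv v hvI)
  have h1 : ∀ᶠ x in 𝓝[>] v, 0 < slope f v x :=
    ((hslope.mono_left (nhdsWithin_mono v (fun x hx => ne_of_gt hx))).eventually
      (eventually_gt_nhds hDpos))
  have h2 : Set.Ioo v t ∈ 𝓝[>] v := Ioo_mem_nhdsGT hvt
  obtain ⟨x, hx1, hx2⟩ := (h1.and (eventually_of_mem h2 (fun x hx => hx))).exists
  have hxv : 0 < x - v := sub_pos.2 hx2.1
  rw [slope_def_field] at hx1
  have h3 : 0 < f x - f v := by
    have h4 := mul_pos hx1 hxv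
    rwa [div_mul_cancel₀ _ (ne_of_gt hxv)] at h4
  have h5 : c < f x := by rw [← hfvc]; linarith
  exact lt_asymm h5 (hafter x hx2.1 hx2.2.le)

/-- Along a collision solution with `t* < ∞` and `ξ(t) → +∞` as `t → t*⁻`, one has
`p ∼ −√ξ`: eventually `p/√ξ` is bounded and bounded away from zero, i.e. there are
`t₁ ∈ [t₀, t*)` and `0 < δ ≤ M` with `−M ≤ p(t)/√(ξ(t)) ≤ −δ` on `[t₁, t*)`. -/
theorem p_asymptotic_neg_sqrt_xi
    (t0 tstar : ℝ) (ht0 : t0 < tstar)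
    (m1 m2 m3 xi p : ℝ → ℝ)
    (hm1 : ∀ t ∈ Set.Ico t0 tstar,
      HasDerivAt m1 (xi t * (-(m2 t)^2 + (m3 t)^2 + 2 * m2 t * m3 t * xi t)) t)
    (hm2 : ∀ t ∈ Set.Ico t0 tstar,
      HasDerivAt m2 (m1 t * m2 t * xi t - m3 t * p t - 2 * m1 t * m3 t * (xi t)^2) t)
    (hm3 : ∀ t ∈ Set.Ico t0 tstar,
      HasDerivAt m3 (m2 t * p t - m1 t * m3 t * xi t) t)
    (hxi : ∀ t ∈ Set.Ico t0 tstar,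
      HasDerivAt xi (-((xi t)^2 + 1) * (2 * p t - m1 t)) t)
    (hp : ∀ t ∈ Set.Ico t0 tstar,
      HasDerivAt p (-((xi t)^2 + 1) * (1 + m2 t * m3 t - 2 * (m3 t)^2 * xi t)) t)
    (hcoll : Tendsto xi (nhdsWithin tstar (Set.Iio tstar)) atTop) :
    ∃ t1 ∈ Set.Ico t0 tstar, ∃ δ M : ℝ, 0 < δ ∧ δ ≤ M ∧
      ∀ t ∈ Set.Ico t1 tstar,
        -M ≤ p t / Real.sqrt (xi t) ∧ p t / Real.sqrt (xi t) ≤ -δ := by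
  -- conserved quantities
  obtain ⟨L2, hL2def⟩ : ∃ L2 : ℝ, L2 = (m1 t0)^2 + (m2 t0)^2 + (m3 t0)^2 := ⟨_, rfl⟩
  obtain ⟨E, hEdef⟩ : ∃ E : ℝ,
      E = (p t0)^2 - m1 t0 * p t0 + (m3 t0)^2 * (xi t0)^2 - m2 t0 * m3 t0 * xi t0 - xi t0 :=
    ⟨_, rfl⟩
  have hL2nonneg : 0 ≤ L2 := by rw [hL2def]; positivity
  have hNconst : ∀ t ∈ Set.Ico t0 tstar, (m1 t)^2 + (m2 t)^2 + (m3 t)^2 = L2 := by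
    intro t ht
    have key := constant_of_has_deriv_right_zero
      (f := fun τ => (m1 τ)^2 + (m2 τ)^2 + (m3 τ)^2) (a := t0) (b := t)
      (fun τ hτ => by
        have hτ' : τ ∈ Set.Ico t0 tstar := ⟨hτ.1, lt_of_le_of_lt hτ.2 ht.2⟩
        exact ((((hm1 τ hτ').pow 2).add ((hm2 τ hτ').pow 2)).add
          ((hm3 τ hτ').pow 2)).continuousAt.continuousWithinAt)
      (fun τ hτ => by
        have hτ' : τ ∈ Set.Ico t0 tstar := ⟨hτ.1, lt_trans hτ.2 ht.2⟩
        have h := (((hm1 τ hτ').pow 2).add ((hm2 τ hτ').pow 2)).add ((hm3 τ hτ').pow 2)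
        have h0 : ((2:ℕ) : ℝ) * m1 τ ^ (2-1) * (xi τ * (-(m2 τ)^2 + (m3 τ)^2 + 2 * m2 τ * m3 τ * xi τ))
            + ((2:ℕ) : ℝ) * m2 τ ^ (2-1) * (m1 τ * m2 τ * xi τ - m3 τ * p τ - 2 * m1 τ * m3 τ * (xi τ)^2)
            + ((2:ℕ) : ℝ) * m3 τ ^ (2-1) * (m2 τ * p τ - m1 τ * m3 τ * xi τ) = 0 := by
          push_cast
          ring
        rw [h0] at h
        exact h.hasDerivWithinAt)
      t ⟨ht.1, le_refl t⟩
    rw [hL2def]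
    exact key
  have hEconst : ∀ t ∈ Set.Ico t0 tstar,
      (p t)^2 - m1 t * p t + (m3 t)^2 * (xi t)^2 - m2 t * m3 t * xi t - xi t = E := by
    intro t ht
    have key := constant_of_has_deriv_right_zero
      (f := fun τ => (p τ)^2 - m1 τ * p τ + (m3 τ)^2 * (xi τ)^2 - m2 τ * m3 τ * xi τ - xi τ)
      (a := t0) (b := t)
      (fun τ hτ => by
        have hτ' : τ ∈ Set.Ico t0 tstar := ⟨hτ.1, lt_of_le_of_lt hτ.2 ht.2⟩
        exact ((((((hp τ hτ').pow 2).sub ((hm1 τ hτ').mul (hp τ hτ'))).add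
          (((hm3 τ hτ').pow 2).mul ((hxi τ hτ').pow 2))).sub
          ((((hm2 τ hτ').mul (hm3 τ hτ')).mul (hxi τ hτ')))).sub
          (hxi τ hτ')).continuousAt.continuousWithinAt)
      (fun τ hτ => by
        have hτ' : τ ∈ Set.Ico t0 tstar := ⟨hτ.1, lt_trans hτ.2 ht.2⟩
        have h := ((((((hp τ hτ').pow 2).sub ((hm1 τ hτ').mul (hp τ hτ'))).add
          (((hm3 τ hτ').pow 2).mul ((hxi τ hτ').pow 2))).sub
          ((((hm2 τ hτ').mul (hm3 τ hτ')).mul (hxi τ hτ')))).sub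
          (hxi τ hτ'))
        have h0 : ((((2:ℕ):ℝ) * p τ ^ (2-1) * (-((xi τ)^2 + 1) * (1 + m2 τ * m3 τ - 2 * (m3 τ)^2 * xi τ))
            - (xi τ * (-(m2 τ)^2 + (m3 τ)^2 + 2 * m2 τ * m3 τ * xi τ) * p τ
                + m1 τ * (-((xi τ)^2 + 1) * (1 + m2 τ * m3 τ - 2 * (m3 τ)^2 * xi τ)))
            + (((2:ℕ):ℝ) * m3 τ ^ (2-1) * (m2 τ * p τ - m1 τ * m3 τ * xi τ) * (xi τ)^2
                + (m3 τ)^2 * (((2:ℕ):ℝ) * xi τ ^ (2-1) * (-((xi τ)^2 + 1) * (2 * p τ - m1 τ))))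
            - (((m1 τ * m2 τ * xi τ - m3 τ * p τ - 2 * m1 τ * m3 τ * (xi τ)^2) * m3 τ
                + m2 τ * (m2 τ * p τ - m1 τ * m3 τ * xi τ)) * xi τ
                + m2 τ * m3 τ * (-((xi τ)^2 + 1) * (2 * p τ - m1 τ)))
            - -((xi τ)^2 + 1) * (2 * p τ - m1 τ)) : ℝ) = 0 := by
          push_cast
          ring
        exact (h.congr_deriv h0).hasDerivWithinAt)
      t ⟨ht.1, le_refl t⟩
    rw [hEdef]
    exact key
  -- threshold and starting time
  obtain ⟨X0, hX0def⟩ : ∃ X0 : ℝ, X0 = 1 + 18 * |E| + 1602 * L2 := ⟨_, rfl⟩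
  have hX0pos : 0 < X0 := by
    rw [hX0def]
    have := abs_nonneg E
    have := hL2nonneg
    linarith
  have hev : ∀ᶠ τ in 𝓝[<] tstar, X0 ≤ xi τ := hcoll.eventually (eventually_ge_atTop X0)
  rw [eventually_iff, mem_nhdsLT_iff_exists_Ioo_subset] at hev
  obtain ⟨a0, ha0, hsub⟩ := hev
  obtain ⟨ta, htadef⟩ : ∃ ta : ℝ, ta = max t0 ((a0 + tstar)/2) := ⟨_, rfl⟩
  have ha0t : a0 < tstar := ha0
  have htaI : ta ∈ Set.Ico t0 tstar := by
    rw [htadef]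
    exact ⟨le_max_left _ _, max_lt ht0 (by linarith)⟩
  have ha0ta : a0 < ta := by
    rw [htadef]
    exact lt_of_lt_of_le (by linarith) (le_max_right _ _)
  have hJsub : Set.Ico ta tstar ⊆ Set.Ico t0 tstar :=
    fun t ht => ⟨htaI.1.trans ht.1, ht.2⟩
  have hJX : ∀ t ∈ Set.Ico ta tstar, X0 ≤ xi t :=
    fun t ht => hsub ⟨lt_of_lt_of_le ha0ta ht.1, ht.2⟩
  -- basic pointwise facts on J
  have hxipos : ∀ t ∈ Set.Ico ta tstar, 0 < xi t :=
    fun t ht => lt_of_lt_of_le hX0pos (hJX t ht)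
  have hRpos : ∀ t ∈ Set.Ico ta tstar, 0 < Real.sqrt (xi t) :=
    fun t ht => Real.sqrt_pos.2 (hxipos t ht)
  have hR2 : ∀ t ∈ Set.Ico ta tstar, (Real.sqrt (xi t))^2 = xi t :=
    fun t ht => Real.sq_sqrt (hxipos t ht).le
  have hX1 : ∀ t ∈ Set.Ico ta tstar, 1 ≤ xi t := by
    intro t ht
    have h1 := hJX t ht
    rw [hX0def] at h1
    have := abs_nonneg E
    have := hL2nonneg
    linarith
  have hR1 : ∀ t ∈ Set.Ico ta tstar, 1 ≤ Real.sqrt (xi t) := by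
    intro t ht
    nlinarith [hR2 t ht, hRpos t ht, hX1 t ht]
  have habsE : ∀ t ∈ Set.Ico ta tstar, 16 * |E| ≤ xi t := by
    intro t ht
    have h1 := hJX t ht
    rw [hX0def] at h1
    have := abs_nonneg E
    have := hL2nonneg
    linarith
  have hL2xi : ∀ t ∈ Set.Ico ta tstar, 1600 * L2 ≤ xi t := by
    intro t ht
    have h1 := hJX t ht
    rw [hX0def] at h1
    have := abs_nonneg E
    have := hL2nonneg
    linarith
  have hm1sq : ∀ t ∈ Set.Ico ta tstar, (m1 t)^2 ≤ L2 := by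
    intro t ht
    have := hNconst t (hJsub ht)
    nlinarith [sq_nonneg (m2 t), sq_nonneg (m3 t)]
  have hm2sq : ∀ t ∈ Set.Ico ta tstar, (m2 t)^2 ≤ L2 := by
    intro t ht
    have := hNconst t (hJsub ht)
    nlinarith [sq_nonneg (m1 t), sq_nonneg (m3 t)]
  -- energy bound: p² + m3²ξ² ≤ 4ξ on J
  have hKey1 : ∀ t ∈ Set.Ico ta tstar, (p t)^2 + (m3 t)^2 * (xi t)^2 ≤ 4 * xi t := by
    intro t ht
    have hEt := hEconst t (hJsub ht)
    have h1 := hm1sq t ht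
    have h2 := hm2sq t ht
    have h3 : E ≤ xi t - L2 := by
      have h4 := hJX t ht
      rw [hX0def] at h4
      have h5 := le_abs_self E
      have := abs_nonneg E
      have := hL2nonneg
      linarith
    have a1 : m1 t * p t ≤ (L2 + (p t)^2)/2 := by
      nlinarith [sq_nonneg (m1 t - p t)]
    have a2 : m2 t * m3 t * xi t ≤ (L2 + (m3 t)^2 * (xi t)^2)/2 := by
      nlinarith [sq_nonneg (m2 t - m3 t * xi t)]
    nlinarith [hEt, h3, a1, a2]
  have hp2 : ∀ t ∈ Set.Ico ta tstar, (p t)^2 ≤ 4 * xi t := by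
    intro t ht
    nlinarith [hKey1 t ht, sq_nonneg (m3 t * xi t)]
  have hplb : ∀ t ∈ Set.Ico ta tstar, -(2 * Real.sqrt (xi t)) ≤ p t := by
    intro t ht
    have h1 : (p t)^2 ≤ 4 * (Real.sqrt (xi t))^2 := by
      rw [hR2 t ht]; exact hp2 t ht
    nlinarith [hRpos t ht, sq_nonneg (p t + 2 * Real.sqrt (xi t))]
  have hm1le : ∀ t ∈ Set.Ico ta tstar, m1 t ≤ Real.sqrt (xi t) / 40 := by
    intro t ht
    have h1 : (m1 t)^2 ≤ (Real.sqrt (xi t))^2 / 1600 := by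
      rw [hR2 t ht]
      have := hL2xi t ht
      have := hm1sq t ht
      linarith
    nlinarith [hRpos t ht]
  -- derivative of Z = p/√ξ
  have hZd : ∀ t ∈ Set.Ico ta tstar,
      HasDerivAt (fun τ => p τ / Real.sqrt (xi τ)) (Dex m1 m2 m3 xi p t) t := by
    intro t ht
    have hne : xi t ≠ 0 := (hxipos t ht).ne'
    have hRne : Real.sqrt (xi t) ≠ 0 := (hRpos t ht).ne'
    exact (hp t (hJsub ht)).div ((hxi t (hJsub ht)).sqrt hne) hRne
  -- the key derivative lower bound in the band p² ≤ ξ/4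
  have hDband : ∀ t ∈ Set.Ico ta tstar, (p t)^2 ≤ xi t / 4 →
      (Real.sqrt (xi t))^3 / 8 ≤ Dex m1 m2 m3 xi p t := by
    intro t ht hband
    have hEt := hEconst t (hJsub ht)
    have hxp := hxipos t ht
    have hrp := hRpos t ht
    have hrne : Real.sqrt (xi t) ≠ 0 := hrp.ne'
    have hr2 := hR2 t ht
    have hKey := hKey1 t ht
    have habs := habsE t ht
    have hL2x := hL2xi t ht
    have hm1s := hm1sq t ht
    have hm2s := hm2sq t ht
    -- the crucial lower bound for the bracket
    have hBr : xi t / 4 ≤ 2 * (m3 t)^2 * (xi t)^2 + 2 * E + m1 t * p t := by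
      have hE1 : E ≤ xi t / 16 := by
        have := le_abs_self E; linarith
      have hE2 : -(xi t / 16) ≤ E := by
        have := neg_abs_le E; linarith
      have c1 : -(xi t)/80 ≤ m1 t * p t := by
        nlinarith [sq_nonneg (p t + 20 * m1 t), hband, hm1s, hL2x]
      have c2 : -(xi t)/16 ≤ m2 t * m3 t * xi t := by
        nlinarith [sq_nonneg (40 * m2 t + m3 t * xi t), hm2s, hL2x, hKey]
      nlinarith [hEt, c1, c2, hE1, hE2, hband, sq_nonneg (m3 t * xi t)]
    -- exact identity for the derivative
    have key : Dex m1 m2 m3 xi p t * (2 * (Real.sqrt (xi t))^3) =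
        ((xi t)^2 + 1) * (2 * (m3 t)^2 * (xi t)^2 + 2 * E + m1 t * p t) := by
      rw [← hEt]
      unfold Dex
      set r : ℝ := Real.sqrt (xi t) with hrdef
      rw [show xi t = r^2 from hr2.symm]
      field_simp
      ring
    have h1 : ((xi t)^2 + 1) * (xi t / 4) ≤ Dex m1 m2 m3 xi p t * (2 * (Real.sqrt (xi t))^3) := by
      rw [key]
      apply mul_le_mul_of_nonneg_left hBr (by positivity)
    have h2 : (Real.sqrt (xi t))^6 / 4 ≤ ((xi t)^2 + 1) * (xi t / 4) := by
      set r : ℝ := Real.sqrt (xi t) with hrdef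
      rw [show xi t = r^2 from hr2.symm]
      nlinarith [sq_nonneg r, hrp]
    nlinarith [pow_pos hrp 3, h1, h2]
  -- bound ξ' ≤ 10 r⁵ and the blow-up rate lemma
  have hXd10 : ∀ t ∈ Set.Ico ta tstar,
      -((xi t)^2 + 1) * (2 * p t - m1 t) ≤ 10 * (Real.sqrt (xi t))^5 := by
    intro t ht
    have hr1 := hR1 t ht
    have hr2 := hR2 t ht
    have hrp := hRpos t ht
    have hA : (xi t)^2 + 1 ≤ 2 * (Real.sqrt (xi t))^4 := by
      set r : ℝ := Real.sqrt (xi t) with hrdef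
      rw [show xi t = r^2 from hr2.symm]
      have ha2 : (1:ℝ) ≤ r^2 := by nlinarith [hr1]
      have ha4 : (1:ℝ) ≤ r^4 := by nlinarith [ha2]
      nlinarith [ha4]
    have hApos : (0:ℝ) < (xi t)^2 + 1 := by positivity
    have hB : m1 t - 2 * p t ≤ 5 * Real.sqrt (xi t) := by
      have h1 := hm1le t ht
      have h2 := hplb t ht
      linarith
    have heq : -((xi t)^2 + 1) * (2 * p t - m1 t) = ((xi t)^2 + 1) * (m1 t - 2 * p t) := by ring
    rw [heq]
    rcases le_or_gt (m1 t - 2 * p t) 0 with h | h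
    · have h3 : ((xi t)^2 + 1) * (m1 t - 2 * p t) ≤ 0 :=
        mul_nonpos_of_nonneg_of_nonpos hApos.le h
      have h4 : (0:ℝ) ≤ 10 * (Real.sqrt (xi t))^5 := by positivity
      linarith
    · have h5 := mul_le_mul hA hB h.le (by positivity)
      nlinarith [pow_pos hrp 5]
  have hginv : ∀ t ∈ Set.Ico ta tstar,
      ((Real.sqrt (xi t))^3)⁻¹ ≤ 15 * (tstar - t) := by
    -- the function G τ = (√ξ τ)⁻³ + 15τ is monotone on J
    have hGd : ∀ τ ∈ Set.Ico ta tstar,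
        HasDerivAt (fun σ => ((Real.sqrt (xi σ))^3)⁻¹ + 15 * σ)
          (-(((3:ℕ):ℝ) * (Real.sqrt (xi τ))^2 *
              (-((xi τ)^2 + 1) * (2 * p τ - m1 τ) / (2 * Real.sqrt (xi τ)))) /
            ((Real.sqrt (xi τ))^3)^2 + 15 * 1) τ := by
      intro τ hτ
      have hne : xi τ ≠ 0 := (hxipos τ hτ).ne'
      have hRne : (Real.sqrt (xi τ))^3 ≠ 0 := ne_of_gt (pow_pos (hRpos τ hτ) 3)
      have hRd := (hxi τ (hJsub hτ)).sqrt hne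
      have h3 := (hRd.pow 3).inv hRne
      have h4 : HasDerivAt (fun σ : ℝ => 15 * σ) (15 * 1) τ := (hasDerivAt_id τ).const_mul 15
      have h5 := h3.add h4
      exact h5
    have hGd' : ∀ τ ∈ Set.Ico ta tstar,
        0 ≤ -(((3:ℕ):ℝ) * (Real.sqrt (xi τ))^2 *
              (-((xi τ)^2 + 1) * (2 * p τ - m1 τ) / (2 * Real.sqrt (xi τ)))) /
            ((Real.sqrt (xi τ))^3)^2 + 15 * 1 := by
      intro τ hτ
      have hrp := hRpos τ hτ
      have hX := hXd10 τ hτ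
      have heq : -(((3:ℕ):ℝ) * (Real.sqrt (xi τ))^2 *
              (-((xi τ)^2 + 1) * (2 * p τ - m1 τ) / (2 * Real.sqrt (xi τ)))) /
            ((Real.sqrt (xi τ))^3)^2
          = -(3 * (-((xi τ)^2 + 1) * (2 * p τ - m1 τ))) / (2 * (Real.sqrt (xi τ))^5) := by
        have hrne : Real.sqrt (xi τ) ≠ 0 := hrp.ne'
        set r : ℝ := Real.sqrt (xi τ) with hrdef
        set X : ℝ := -((xi τ)^2 + 1) * (2 * p τ - m1 τ) with hXdef
        push_cast
        field_simp
      rw [heq]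
      have hc : (0:ℝ) < 2 * (Real.sqrt (xi τ))^5 := by positivity
      have h7 : -(15:ℝ) ≤ -(3 * (-((xi τ)^2 + 1) * (2 * p τ - m1 τ))) /
          (2 * (Real.sqrt (xi τ))^5) := by
        rw [le_div_iff₀ hc]
        nlinarith [hX]
      linarith
    have hmono : MonotoneOn (fun σ => ((Real.sqrt (xi σ))^3)⁻¹ + 15 * σ)
        (Set.Ico ta tstar) := by
      apply monotoneOn_of_deriv_nonneg (convex_Ico ta tstar)
      · intro τ hτ
        exact (hGd τ hτ).continuousAt.continuousWithinAt
      · intro τ hτ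
        rw [interior_Ico] at hτ
        exact ((hGd τ ⟨hτ.1.le, hτ.2⟩).differentiableAt).differentiableWithinAt
      · intro τ hτ
        rw [interior_Ico] at hτ
        rw [(hGd τ ⟨hτ.1.le, hτ.2⟩).deriv]
        exact hGd' τ ⟨hτ.1.le, hτ.2⟩
    intro t ht
    -- limit of G along s → tstar⁻
    have hsqrtTop : Tendsto (fun s => Real.sqrt (xi s)) (𝓝[<] tstar) atTop := by
      rw [tendsto_atTop]
      intro b
      filter_upwards [hcoll.eventually (eventually_ge_atTop (b^2))] with s hs
      calc b ≤ |b| := le_abs_self b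
        _ = Real.sqrt (b^2) := (Real.sqrt_sq_eq_abs b).symm
        _ ≤ Real.sqrt (xi s) := Real.sqrt_le_sqrt hs
    have hcubeTop : Tendsto (fun s => (Real.sqrt (xi s))^3) (𝓝[<] tstar) atTop :=
      (tendsto_pow_atTop (three_ne_zero)).comp hsqrtTop
    have hinv0 : Tendsto (fun s => ((Real.sqrt (xi s))^3)⁻¹) (𝓝[<] tstar) (𝓝 0) :=
      hcubeTop.inv_tendsto_atTop
    have hlin : Tendsto (fun s : ℝ => 15 * s) (𝓝[<] tstar) (𝓝 (15 * tstar)) :=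
      ((continuous_const.mul continuous_id).tendsto tstar).mono_left nhdsWithin_le_nhds
    have htot : Tendsto (fun s => ((Real.sqrt (xi s))^3)⁻¹ + 15 * s) (𝓝[<] tstar)
        (𝓝 (0 + 15 * tstar)) := hinv0.add hlin
    have hle : ((Real.sqrt (xi t))^3)⁻¹ + 15 * t ≤ 0 + 15 * tstar := by
      apply ge_of_tendsto htot
      filter_upwards [Ioo_mem_nhdsLT ht.2] with s hs
      exact hmono ht ⟨ht.1.trans hs.1.le, hs.2⟩ hs.1.le
    linarith
  -- conclusion
  refine ⟨ta, htaI, 1/2, 2, by norm_num, by norm_num, ?_⟩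
  intro t ht
  constructor
  · -- lower bound -2 ≤ p/√ξ
    rw [le_div_iff₀ (hRpos t ht)]
    have := hplb t ht
    linarith
  · -- upper bound p/√ξ ≤ -(1/2)
    by_contra hcon
    push_neg at hcon
    by_cases hcase : ∃ u, u ∈ Set.Ico t tstar ∧ 1/2 ≤ p u / Real.sqrt (xi u)
    · -- once Z ≥ 1/2, it stays ≥ 1/2, so ξ decreases forever: contradiction
      obtain ⟨u, hu, hZu⟩ := hcase
      have huJ : u ∈ Set.Ico ta tstar := ⟨ht.1.trans hu.1, hu.2⟩
      have hinv : ∀ w ∈ Set.Ico u tstar, 1/2 ≤ p w / Real.sqrt (xi w) := by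
        intro w hw
        have hsubJ : Set.Icc u w ⊆ Set.Ico ta tstar :=
          fun v hv => ⟨huJ.1.trans hv.1, lt_of_le_of_lt hv.2 hw.2⟩
        apply barrier_lemma (D := fun v => Dex m1 m2 m3 xi p v) hw.1
          (fun v hv => hZd v (hsubJ hv)) ?_ hZu
        intro v hv hfv
        have hvJ := hsubJ hv
        have hRnev : Real.sqrt (xi v) ≠ 0 := (hRpos v hvJ).ne'
        have hpv : p v = 1/2 * Real.sqrt (xi v) := (div_eq_iff hRnev).mp hfv
        have hb : (p v)^2 ≤ xi v / 4 := by
          rw [hpv]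
          nlinarith [hR2 v hvJ]
        have h1 := hDband v hvJ hb
        have h2 : (0:ℝ) < (Real.sqrt (xi v))^3 / 8 := by positivity
        linarith
      have hXdnp : ∀ w ∈ Set.Ico u tstar, -((xi w)^2 + 1) * (2 * p w - m1 w) ≤ 0 := by
        intro w hw
        have hwJ : w ∈ Set.Ico ta tstar := ⟨huJ.1.trans hw.1, hw.2⟩
        have h1 := hinv w hw
        have hpw : 1/2 * Real.sqrt (xi w) ≤ p w := (le_div_iff₀ (hRpos w hwJ)).mp h1
        have hm1w := hm1le w hwJ
        have hr1 := hR1 w hwJ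
        have h2 : 0 < 2 * p w - m1 w := by linarith
        have h3 : (0:ℝ) < (xi w)^2 + 1 := by positivity
        nlinarith
      have hanti : AntitoneOn xi (Set.Ico u tstar) := by
        apply antitoneOn_of_deriv_nonpos (convex_Ico u tstar)
        · intro w hw
          have hwJ : w ∈ Set.Ico t0 tstar := hJsub ⟨huJ.1.trans hw.1, hw.2⟩
          exact (hxi w hwJ).continuousAt.continuousWithinAt
        · intro w hw
          rw [interior_Ico] at hw
          have hwJ : w ∈ Set.Ico t0 tstar := hJsub ⟨huJ.1.trans hw.1.le, hw.2⟩
          exact (hxi w hwJ).differentiableAt.differentiableWithinAt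
        · intro w hw
          rw [interior_Ico] at hw
          have hwJ : w ∈ Set.Ico t0 tstar := hJsub ⟨huJ.1.trans hw.1.le, hw.2⟩
          rw [(hxi w hwJ).deriv]
          exact hXdnp w ⟨hw.1.le, hw.2⟩
      obtain ⟨w, hw1, hw2⟩ := ((hcoll.eventually_gt_atTop (xi u)).and
        (eventually_of_mem (Ioo_mem_nhdsLT hu.2) (fun x hx => hx))).exists
      have hle := hanti ⟨le_refl u, hu.2⟩ ⟨hw2.1.le, hw2.2⟩ hw2.1.le
      exact absurd hle (not_le.2 hw1)
    · -- Z stays in the band [−1/2, 1/2): forced to increase beyond 1/2, contradiction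
      push_neg at hcase
      have hlow : ∀ w ∈ Set.Ico t tstar, -(1/2) ≤ p w / Real.sqrt (xi w) := by
        intro w hw
        have hsubJ : Set.Icc t w ⊆ Set.Ico ta tstar :=
          fun v hv => ⟨ht.1.trans hv.1, lt_of_le_of_lt hv.2 hw.2⟩
        apply barrier_lemma (D := fun v => Dex m1 m2 m3 xi p v) hw.1
          (fun v hv => hZd v (hsubJ hv)) ?_ hcon.le
        intro v hv hfv
        have hvJ := hsubJ hv
        have hRnev : Real.sqrt (xi v) ≠ 0 := (hRpos v hvJ).ne'
        have hpv : p v = -(1/2) * Real.sqrt (xi v) := (div_eq_iff hRnev).mp hfv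
        have hb : (p v)^2 ≤ xi v / 4 := by
          rw [hpv]
          nlinarith [hR2 v hvJ]
        have h1 := hDband v hvJ hb
        have h2 : (0:ℝ) < (Real.sqrt (xi v))^3 / 8 := by positivity
        linarith
      have hband : ∀ w ∈ Set.Ico t tstar, (p w)^2 ≤ xi w / 4 := by
        intro w hw
        have hwJ : w ∈ Set.Ico ta tstar := ⟨ht.1.trans hw.1, hw.2⟩
        have h1 := hlow w hw
        have h2 := hcase w hw
        have hpw1 : -(1/2) * Real.sqrt (xi w) ≤ p w := (le_div_iff₀ (hRpos w hwJ)).mp h1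
        have hpw2 : p w < 1/2 * Real.sqrt (xi w) := (div_lt_iff₀ (hRpos w hwJ)).mp h2
        nlinarith [hR2 w hwJ]
      -- W = Z + (1/120) log(tstar − ·) is monotone on [t, tstar)
      have hWd : ∀ w ∈ Set.Ico t tstar,
          HasDerivAt (fun τ => p τ / Real.sqrt (xi τ) + 1/120 * Real.log (tstar - τ))
            (Dex m1 m2 m3 xi p w + 1/120 * ((tstar - w)⁻¹ * -1)) w := by
        intro w hw
        have hwJ : w ∈ Set.Ico ta tstar := ⟨ht.1.trans hw.1, hw.2⟩
        have hne : tstar - w ≠ 0 := sub_ne_zero.2 (ne_of_gt hw.2)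
        have hin : HasDerivAt (fun τ : ℝ => tstar - τ) (-1) w := by
          simpa using (hasDerivAt_id w).const_sub tstar
        have hlog : HasDerivAt (fun τ => Real.log (tstar - τ)) ((tstar - w)⁻¹ * -1) w :=
          (Real.hasDerivAt_log hne).comp w hin
        exact (hZd w hwJ).add (hlog.const_mul (1/120))
      have hWnonneg : ∀ w ∈ Set.Ico t tstar,
          0 ≤ Dex m1 m2 m3 xi p w + 1/120 * ((tstar - w)⁻¹ * -1) := by
        intro w hw
        have hwJ : w ∈ Set.Ico ta tstar := ⟨ht.1.trans hw.1, hw.2⟩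
        have h1 := hDband w hwJ (hband w hw)
        have h2 := hginv w hwJ
        have hrp := hRpos w hwJ
        have htw : (0:ℝ) < tstar - w := sub_pos.2 hw.2
        have h3 : 1 ≤ 15 * (tstar - w) * (Real.sqrt (xi w))^3 := by
          have h4 := mul_le_mul_of_nonneg_right h2 (le_of_lt (pow_pos hrp 3))
          rwa [inv_mul_cancel₀ (ne_of_gt (pow_pos hrp 3))] at h4
        have h5 : 1/120 * ((tstar - w)⁻¹ * -1) = -(1 / (120 * (tstar - w))) := by
          field_simp
        rw [h5]
        have h6 : 1 / (120 * (tstar - w)) ≤ (Real.sqrt (xi w))^3 / 8 := by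
          rw [div_le_div_iff₀ (by positivity) (by norm_num)]
          nlinarith [h3]
        linarith
      have hWmono : MonotoneOn (fun τ => p τ / Real.sqrt (xi τ) + 1/120 * Real.log (tstar - τ))
          (Set.Ico t tstar) := by
        apply monotoneOn_of_deriv_nonneg (convex_Ico t tstar)
        · intro w hw
          exact (hWd w hw).continuousAt.continuousWithinAt
        · intro w hw
          rw [interior_Ico] at hw
          exact ((hWd w ⟨hw.1.le, hw.2⟩).differentiableAt).differentiableWithinAt
        · intro w hw
          rw [interior_Ico] at hw
          rw [(hWd w ⟨hw.1.le, hw.2⟩).deriv]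
          exact hWnonneg w ⟨hw.1.le, hw.2⟩
      -- pick a time close enough to tstar to get a contradiction
      have htt : (0:ℝ) < tstar - t := sub_pos.2 ht.2
      obtain ⟨ε, hεdef⟩ : ∃ e : ℝ,
          e = min (Real.exp (Real.log (tstar - t) - 200)) ((tstar - t)/2) := ⟨_, rfl⟩
      have hεpos : 0 < ε := by
        rw [hεdef]
        exact lt_min (Real.exp_pos _) (by linarith)
      have hεle : ε ≤ (tstar - t)/2 := by
        rw [hεdef]
        exact min_le_right _ _
      obtain ⟨w, hwdef⟩ : ∃ w : ℝ, w = tstar - ε := ⟨_, rfl⟩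
      have hwmem : w ∈ Set.Ico t tstar := ⟨by rw [hwdef]; linarith, by rw [hwdef]; linarith⟩
      have hWle := hWmono ⟨le_refl t, ht.2⟩ hwmem hwmem.1
      have htsw : tstar - w = ε := by rw [hwdef]; ring
      have hlogε : Real.log ε ≤ Real.log (tstar - t) - 200 := by
        calc Real.log ε ≤ Real.log (Real.exp (Real.log (tstar - t) - 200)) := by
              apply Real.log_le_log hεpos
              rw [hεdef]
              exact min_le_left _ _
          _ = Real.log (tstar - t) - 200 := Real.log_exp _
      have hZw : p w / Real.sqrt (xi w) < 1/2 := hcase w hwmem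
      have hWle' : p t / Real.sqrt (xi t) + 1/120 * Real.log (tstar - t) ≤
          p w / Real.sqrt (xi w) + 1/120 * Real.log (tstar - w) := hWle
      rw [htsw] at hWle'
      linarith [hWle', hcon, hlogε, hZw]
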